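/- arXiv:1512.00895 — 3 statements merged into one kernel-verified Lean document; each statement's English description precedes it below -/
import Mathlib

section
/- Let $\{a(t)\}_{t\ge 1}$ be a positive non-increasing sequence with $\sum_{t=1}^\infty a(t)^2 < \infty$, let $\lambda \in (0,1)$, and let $c(t) = \lambda^t C_0 + \sum_{s=1}^{t} \lambda^{t-s} a(s) C_1$ for constants $C_0, C_1 \ge 0$. Then $\sum_{t=0}^{\infty} a(t+1) c(t) < \infty$. -/
theorem stmt_1 (a : ℕ → ℝ) (ha : ∀ t ≥ 1, 0 < a t)
    (hmono : ∀ s t, 1 ≤ s → s ≤ t → a t ≤ a s)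
    (hsq : Summable (fun t => (a (t + 1)) ^ 2))
    (lam : ℝ) (hlam : lam ∈ Set.Ioo (0 : ℝ) 1)
    (C₀ C₁ : ℝ) (hC₀ : 0 ≤ C₀) (hC₁ : 0 ≤ C₁)
    (c : ℕ → ℝ)
    (hc : ∀ t, c t = lam ^ t * C₀ + ∑ s ∈ Finset.Icc 1 t, lam ^ (t - s) * a s * C₁) :
    Summable (fun t => a (t + 1) * c t) := by
  obtain ⟨hl0, hl1⟩ := hlam
  have hl0' : (0:ℝ) ≤ lam := hl0.le
  have hsub : (0:ℝ) < 1 - lam := by linarith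
  set g : ℕ → ℝ := fun s => if s = 0 then 0 else a s ^ 2 with hg
  have hg_sum : Summable g := by
    rw [← summable_nat_add_iff 1]
    refine hsq.congr ?_
    intro n; simp [hg]
  have hgeom : Summable (fun n : ℕ => lam ^ n) :=
    summable_geometric_of_lt_one hl0' hl1
  set S : ℕ → ℝ := fun t => ∑ s ∈ Finset.Icc 1 t, lam ^ (t - s) * a s ^ 2 with hS
  have hSeq : ∀ t, S t = ∑ k ∈ Finset.range (t+1), g k * lam ^ (t - k) := by
    intro t
    rw [Finset.sum_range_succ']
    simp only [hg, if_pos rfl, zero_mul, add_zero]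
    show (∑ s ∈ Finset.Icc 1 t, lam ^ (t - s) * a s ^ 2) = _
    rw [← Finset.Ico_add_one_right_eq_Icc, Finset.sum_Ico_eq_sum_range]
    try simp only [Nat.add_sub_cancel, Nat.succ_sub_one]
    refine Finset.sum_congr rfl ?_
    intro i hi
    have : i + 1 ≠ 0 := Nat.succ_ne_zero i
    simp only [Nat.add_comm 1 i, if_neg this]
    ring
  have hSnn : ∀ t, 0 ≤ S t := by
    intro t
    refine Finset.sum_nonneg ?_
    intro s _
    exact mul_nonneg (pow_nonneg hl0' _) (sq_nonneg _)
  have hS_sum : Summable S := by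
    have h1 : Summable (fun n => ‖g n‖) := summable_norm_iff.mpr hg_sum
    have h2 : Summable (fun n : ℕ => ‖lam ^ n‖) := summable_norm_iff.mpr hgeom
    have := summable_norm_sum_mul_range_of_summable_norm h1 h2
    refine this.congr ?_
    intro t
    rw [← hSeq t, Real.norm_eq_abs, abs_of_nonneg (hSnn t)]
  have hgs : ∀ t, ∑ s ∈ Finset.Icc 1 t, lam ^ (t - s) ≤ 1 / (1 - lam) := by
    intro t
    have he : ∑ s ∈ Finset.Icc 1 t, lam ^ (t - s) = ∑ i ∈ Finset.range t, lam ^ i := by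
      rw [← Finset.Ico_add_one_right_eq_Icc, Finset.sum_Ico_eq_sum_range]
      try simp only [Nat.add_sub_cancel, Nat.succ_sub_one]
      rw [← Finset.sum_range_reflect (fun i => lam ^ i) t]
      refine Finset.sum_congr rfl ?_
      intro i hi
      congr 1
      omega
    rw [he]
    calc ∑ i ∈ Finset.range t, lam ^ i ≤ ∑' i : ℕ, lam ^ i :=
          Summable.sum_le_tsum _ (fun i _ => pow_nonneg hl0' i) hgeom
      _ = (1 - lam)⁻¹ := tsum_geometric_of_lt_one hl0' hl1
      _ = 1 / (1 - lam) := (one_div _).symm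
  set u : ℕ → ℝ := fun t =>
    a 1 * C₀ * lam ^ t + (C₁/2 * S t + C₁/(2*(1-lam)) * a (t+1)^2) with hu
  have hu_sum : Summable u :=
    (hgeom.mul_left (a 1 * C₀)).add
      ((hS_sum.mul_left (C₁/2)).add (hsq.mul_left (C₁/(2*(1-lam)))))
  refine Summable.of_nonneg_of_le ?_ ?_ hu_sum
  · intro t
    have h1 : 0 < a (t+1) := ha _ (Nat.le_add_left 1 t)
    have h2 : 0 ≤ c t := by
      rw [hc t]
      have : (0:ℝ) ≤ ∑ s ∈ Finset.Icc 1 t, lam ^ (t - s) * a s * C₁ := by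
        refine Finset.sum_nonneg ?_
        intro s hs
        have := (ha s (Finset.mem_Icc.mp hs).1).le
        positivity
      have := pow_nonneg hl0' t
      nlinarith
    positivity
  · intro t
    rw [hc t, mul_add, hu]
    have h1 : 0 < a (t+1) := ha _ (Nat.le_add_left 1 t)
    have haub : a (t+1) ≤ a 1 := hmono 1 (t+1) le_rfl (Nat.le_add_left 1 t)
    have hA : a (t+1) * (lam ^ t * C₀) ≤ a 1 * C₀ * lam ^ t := by
      have hp := pow_nonneg hl0' t
      nlinarith [mul_nonneg (sub_nonneg.mpr haub) (mul_nonneg hC₀ hp)]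
    have hB : a (t+1) * (∑ s ∈ Finset.Icc 1 t, lam ^ (t - s) * a s * C₁)
        ≤ C₁/2 * S t + C₁/(2*(1-lam)) * a (t+1)^2 := by
      rw [Finset.mul_sum]
      have step : ∀ s ∈ Finset.Icc 1 t,
          a (t+1) * (lam ^ (t - s) * a s * C₁)
            ≤ C₁/2 * (lam ^ (t-s) * a s ^ 2) + C₁/2 * a (t+1)^2 * lam ^ (t-s) := by
        intro s hs
        have hp := pow_nonneg hl0' (t - s)
        nlinarith [sq_nonneg (a s - a (t+1)), mul_nonneg hp (sq_nonneg (a s - a (t+1)))]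
      calc ∑ s ∈ Finset.Icc 1 t, a (t+1) * (lam ^ (t - s) * a s * C₁)
          ≤ ∑ s ∈ Finset.Icc 1 t,
              (C₁/2 * (lam ^ (t-s) * a s ^ 2) + C₁/2 * a (t+1)^2 * lam ^ (t-s)) :=
            Finset.sum_le_sum step
        _ = C₁/2 * S t + C₁/2 * a (t+1)^2 * ∑ s ∈ Finset.Icc 1 t, lam ^ (t-s) := by
            rw [Finset.sum_add_distrib, ← Finset.mul_sum, ← Finset.mul_sum, hS]
        _ ≤ C₁/2 * S t + C₁/2 * a (t+1)^2 * (1/(1-lam)) := by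
            have := hgs t
            have hnn : 0 ≤ C₁/2 * a (t+1)^2 := by positivity
            nlinarith
        _ = C₁/2 * S t + C₁/(2*(1-lam)) * a (t+1)^2 := by
            field_simp
            try ring
    linarith
end

section
/- Suppose $f: \mathbb{R}^d \to \mathbb{R}^d$ satisfies $f(x) = Hx + \delta(x)$ near $0$, where $H$ is symmetric positive definite with minimal eigenvalue $\tilde\lambda$ and $\|\delta(x)\| = o(\|x\|)$ as $x \to 0$. Then for every $a > \frac{1}{2\tilde\lambda}$ there exist a symmetric positive definite matrix $C$, constants $\beta > \frac{1}{2a}$ and $\varepsilon > 0$, such that $(Cf(x), x) \ge \beta (Cx, x)$ whenever $\|x\| < \varepsilon$. -/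
open Matrix Asymptotics

theorem stmt_7 (d : ℕ) (f : (Fin d → ℝ) → (Fin d → ℝ))
    (H : Matrix (Fin d) (Fin d) ℝ) (hHsymm : H.IsSymm) (hHpos : H.PosDef)
    (tl : ℝ) (htl : 0 < tl) (htl_mem : tl ∈ spectrum ℝ H)
    (htl_min : ∀ μ ∈ spectrum ℝ H, tl ≤ μ)
    (hf : (fun x => f x - H.mulVec x) =o[nhds 0] (fun x => x))
    (a : ℝ) (ha : 1 / (2 * tl) < a) :
    ∃ C : Matrix (Fin d) (Fin d) ℝ, C.IsSymm ∧ C.PosDef ∧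
      ∃ β > 1 / (2 * a), ∃ ε > 0, ∀ x : Fin d → ℝ, ‖x‖ < ε →
        β * (C.mulVec x ⬝ᵥ x) ≤ C.mulVec (f x) ⬝ᵥ x := by
  have ha0 : 0 < a := lt_trans (by positivity) ha
  have hba : 1 / (2 * a) < tl := by
    rw [div_lt_iff₀ (by positivity)] at ha ⊢
    nlinarith
  set β : ℝ := (tl + 1 / (2 * a)) / 2 with hβdef
  have hβ1 : 1 / (2 * a) < β := by rw [hβdef]; linarith
  have hβ2 : β < tl := by rw [hβdef]; linarith
  -- the shifted matrix is PSD
  have hM : (H - tl • 1).IsHermitian := by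
    have h1 : Hᵀ = H := hHsymm
    simp [Matrix.IsHermitian, conjTranspose_sub, conjTranspose_smul, conjTranspose, h1,
      Matrix.map_id]
    ext i j
    simp [h1 ▸ congrFun (congrFun h1.symm i) j]
  have hMsemi : (H - tl • 1).PosSemidef := by
    apply hM.posSemidef_iff_eigenvalues_nonneg.mpr
    intro i
    have hmem := hM.eigenvalues_mem_spectrum_real i
    set t := hM.eigenvalues i
    have hshift : t + tl ∈ spectrum ℝ H := by
      rw [spectrum.mem_iff] at hmem ⊢
      convert hmem using 2
      rw [Algebra.algebraMap_eq_smul_one, Algebra.algebraMap_eq_smul_one, add_smul]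
      abel
    have := htl_min _ hshift
    exact (by linarith : (0:ℝ) ≤ t)
  have hkey : ∀ x : Fin d → ℝ, tl * (x ⬝ᵥ x) ≤ (H *ᵥ x) ⬝ᵥ x := by
    intro x
    have h0 := hMsemi.re_dotProduct_nonneg x
    simp only [RCLike.re_to_real, star_trivial, sub_mulVec, smul_mulVec, one_mulVec,
      dotProduct_sub, dotProduct_smul] at h0
    have hc : (H *ᵥ x) ⬝ᵥ x = x ⬝ᵥ (H *ᵥ x) := dotProduct_comm _ _
    rw [hc]
    simpa [smul_eq_mul] using h0
  -- sup-norm squared is at most the dot product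
  have hxx : ∀ x : Fin d → ℝ, 0 ≤ x ⬝ᵥ x :=
    fun x => Finset.sum_nonneg fun i _ => mul_self_nonneg _
  have hnorm : ∀ x : Fin d → ℝ, ‖x‖ ^ 2 ≤ x ⬝ᵥ x := by
    intro x
    have h1 : ‖x‖ ≤ Real.sqrt (x ⬝ᵥ x) := by
      rw [pi_norm_le_iff_of_nonneg (Real.sqrt_nonneg _)]
      intro i
      rw [Real.norm_eq_abs, ← Real.sqrt_sq_eq_abs]
      apply Real.sqrt_le_sqrt
      rw [sq]
      exact Finset.single_le_sum (f := fun j => x j * x j)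
        (fun j _ => mul_self_nonneg (x j)) (Finset.mem_univ i)
    calc ‖x‖ ^ 2 ≤ Real.sqrt (x ⬝ᵥ x) ^ 2 := by
          apply pow_le_pow_left₀ (norm_nonneg _) h1
      _ = x ⬝ᵥ x := Real.sq_sqrt (hxx x)
  -- choose c and ε from the little-o hypothesis
  set c : ℝ := (tl - β) / (d + 1) with hcdef
  have hc0 : 0 < c := by
    apply div_pos (by linarith) (by positivity)
  have hdc : (d : ℝ) * c ≤ tl - β := by
    have h : (d : ℝ) / (d + 1) ≤ 1 :=
      (div_le_one (show (0:ℝ) < d + 1 by positivity)).mpr (by linarith)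
    calc (d : ℝ) * c = (tl - β) * ((d : ℝ) / (d + 1)) := by rw [hcdef]; ring
      _ ≤ (tl - β) * 1 := mul_le_mul_of_nonneg_left h (by linarith)
      _ = tl - β := mul_one _
  rw [isLittleO_iff] at hf
  have hev := hf hc0
  rw [Metric.eventually_nhds_iff] at hev
  obtain ⟨ε, hε, hball⟩ := hev
  refine ⟨1, Matrix.isSymm_one, Matrix.PosDef.one, β, hβ1, ε, hε, ?_⟩
  intro x hx
  simp only [Matrix.one_mulVec]
  set δ : Fin d → ℝ := f x - H *ᵥ x with hδdef
  have hδ : ‖δ‖ ≤ c * ‖x‖ := by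
    have := hball (y := x) (by simpa [dist_zero_right] using hx)
    simpa using this
  have habs : |δ ⬝ᵥ x| ≤ (d : ℝ) * (‖δ‖ * ‖x‖) := by
    calc |δ ⬝ᵥ x| = |∑ i, δ i * x i| := rfl
      _ ≤ ∑ i, |δ i * x i| := Finset.abs_sum_le_sum_abs _ _
      _ ≤ ∑ _i : Fin d, ‖δ‖ * ‖x‖ := by
          apply Finset.sum_le_sum
          intro i _
          rw [abs_mul]
          exact mul_le_mul (norm_le_pi_norm δ i) (norm_le_pi_norm x i)
            (abs_nonneg _) (norm_nonneg _)
      _ = (d : ℝ) * (‖δ‖ * ‖x‖) := by simp [mul_comm]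
  have hfx : f x ⬝ᵥ x = δ ⬝ᵥ x + (H *ᵥ x) ⬝ᵥ x := by
    rw [hδdef, sub_dotProduct]; ring
  have hδx : -( (tl - β) * (x ⬝ᵥ x)) ≤ δ ⬝ᵥ x := by
    have h1 : (d : ℝ) * (‖δ‖ * ‖x‖) ≤ (d : ℝ) * (c * ‖x‖ * ‖x‖) := by
      apply mul_le_mul_of_nonneg_left _ (Nat.cast_nonneg d)
      exact mul_le_mul_of_nonneg_right hδ (norm_nonneg _)
    have h2 : (d : ℝ) * (c * ‖x‖ * ‖x‖) ≤ (tl - β) * ‖x‖ ^ 2 := by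
      have := mul_le_mul_of_nonneg_right hdc (mul_self_nonneg ‖x‖)
      calc (d : ℝ) * (c * ‖x‖ * ‖x‖) = (d : ℝ) * c * (‖x‖ * ‖x‖) := by ring
        _ ≤ (tl - β) * (‖x‖ * ‖x‖) := this
        _ = (tl - β) * ‖x‖ ^ 2 := by ring
    have h3 : (tl - β) * ‖x‖ ^ 2 ≤ (tl - β) * (x ⬝ᵥ x) :=
      mul_le_mul_of_nonneg_left (hnorm x) (by linarith)
    have := abs_le.mp habs
    linarith
  have := hkey x
  rw [hfx]
  linarith
end

section
/- Define $W(y) = \int_0^y \int_0^v \frac{e^{u-v}}{\sqrt{uv}}\, du\, dv$ for $y \ge 0$. Then there exists a constant $c > 0$ such that $W(y) < \ln(1+y) + c$ for all $y \ge 0$. -/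
open MeasureTheory intervalIntegral Real Set

noncomputable def Wker (v u : ℝ) : ℝ := Real.exp (u - v) / Real.sqrt (u * v)

lemma wker_nonneg (v u : ℝ) : 0 ≤ Wker v u := by
  unfold Wker; positivity

/-- pointwise bound: for `0 ≤ u ≤ b ≤ v`, `Wker v u ≤ exp (b - v) * (√v)⁻¹ * u ^ (-1/2)` -/
lemma wker_le_head (v b u : ℝ) (hu : 0 ≤ u) (hub : u ≤ b) (hbv : b ≤ v) :
    Wker v u ≤ Real.exp (b - v) * (Real.sqrt v)⁻¹ * u ^ (-(1/2) : ℝ) := by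
  rcases eq_or_lt_of_le hu with h0 | h0
  · simp [Wker, ← h0, Real.zero_rpow (by norm_num : (-(1/2):ℝ) ≠ 0)]
  · have hv : 0 < v := lt_of_lt_of_le (lt_of_lt_of_le h0 hub) hbv
    have hsq : Real.sqrt (u * v) = Real.sqrt u * Real.sqrt v := Real.sqrt_mul hu v
    have hrw : u ^ (-(1/2) : ℝ) = (Real.sqrt u)⁻¹ := by
      rw [Real.rpow_neg hu, Real.sqrt_eq_rpow]
    rw [Wker, hsq, hrw]
    have h1 : Real.exp (u - v) ≤ Real.exp (b - v) := by
      apply Real.exp_le_exp.2; linarith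
    have hsu : 0 < Real.sqrt u := Real.sqrt_pos.2 h0
    have hsv : 0 < Real.sqrt v := Real.sqrt_pos.2 hv
    rw [div_le_iff₀ (by positivity)]
    calc Real.exp (u - v) ≤ Real.exp (b - v) := h1
      _ = Real.exp (b - v) * (Real.sqrt v)⁻¹ * (Real.sqrt u)⁻¹ * (Real.sqrt u * Real.sqrt v) := by
          field_simp
      _ = _ := by ring

lemma integral_head (v b : ℝ) (hb : 0 ≤ b) :
    (∫ u in (0:ℝ)..b, Real.exp (b - v) * (Real.sqrt v)⁻¹ * u ^ (-(1/2) : ℝ))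
      = Real.exp (b - v) * (Real.sqrt v)⁻¹ * (2 * Real.sqrt b) := by
  rw [intervalIntegral.integral_const_mul, integral_rpow (Or.inl (by norm_num))]
  rw [Real.zero_rpow (by norm_num : (-(1/2)+1:ℝ) ≠ 0)]
  rw [show (-(1/2)+1 : ℝ) = 1/2 by norm_num, ← Real.sqrt_eq_rpow]
  ring

lemma headker_intble (v b c d : ℝ) :
    IntervalIntegrable (fun u => Real.exp (b - v) * (Real.sqrt v)⁻¹ * u ^ (-(1/2) : ℝ))
      volume c d :=
  (intervalIntegral.intervalIntegrable_rpow' (by norm_num)).const_mul _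

/-- head bound -/
lemma head_bound (v b : ℝ) (hb : 0 ≤ b) (hbv : b ≤ v)
    (hint : IntervalIntegrable (Wker v) volume 0 b) :
    (∫ u in (0:ℝ)..b, Wker v u) ≤ Real.exp (b - v) * (Real.sqrt v)⁻¹ * (2 * Real.sqrt b) := by
  rw [← integral_head v b hb]
  apply intervalIntegral.integral_mono_on hb hint (headker_intble v b 0 b)
  intro u hu
  exact wker_le_head v b u hu.1 hu.2 hbv

/-- small-v bound -/
lemma inner_le_two (v : ℝ) (hv : 0 ≤ v) :
    (∫ u in (0:ℝ)..v, Wker v u) ≤ 2 := by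
  by_cases hint : IntervalIntegrable (Wker v) volume 0 v
  · refine le_trans (head_bound v v hv le_rfl hint) ?_
    rcases eq_or_lt_of_le hv with h0 | h0
    · simp [← h0]
    · have hsv : 0 < Real.sqrt v := Real.sqrt_pos.2 h0
      rw [show v - v = 0 by ring, Real.exp_zero, one_mul]
      rw [inv_mul_le_iff₀ hsv]
      nlinarith [Real.sq_sqrt hv]
  · rw [intervalIntegral.integral_undef hint]; norm_num

lemma integral_exp_lin (l a v : ℝ) (hl : 0 < l) :
    (∫ u in a..v, Real.exp (l * (u - v)))
      = (Real.exp (l * (v - v)) - Real.exp (l * (a - v))) / l := by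
  have hderiv : ∀ x ∈ Set.uIcc a v,
      HasDerivAt (fun u => Real.exp (l * (u - v)) / l) (Real.exp (l * (x - v))) x := by
    intro x _
    have h1 : HasDerivAt (fun u : ℝ => l * (u - v)) l x := by
      simpa using ((hasDerivAt_id x).sub_const v).const_mul l
    have h2 := h1.exp
    simpa [mul_comm, mul_div_assoc, mul_div_cancel_left₀, hl.ne'] using h2.div_const l
  have hint : IntervalIntegrable (fun u => Real.exp (l * (u - v))) volume a v :=
    (Real.continuous_exp.comp (by continuity)).intervalIntegrable a v
  rw [intervalIntegral.integral_eq_sub_of_hasDerivAt hderiv hint]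
  ring

lemma wker_le_tail (v u : ℝ) (hv : 4 ≤ v) (hu : Real.sqrt v ≤ u) (huv : u ≤ v) :
    Wker v u ≤ v⁻¹ * Real.exp ((1 - 1/(2 * Real.sqrt v)) * (u - v)) := by
  set a := Real.sqrt v with ha
  have hv0 : (0:ℝ) < v := by linarith
  have ha2 : 2 ≤ a := by
    rw [ha, show (2:ℝ) = Real.sqrt 4 by rw [show (4:ℝ) = 2^2 by norm_num, Real.sqrt_sq]; norm_num]
    exact Real.sqrt_le_sqrt hv
  have ha0 : 0 < a := by linarith
  have hu0 : 0 < u := lt_of_lt_of_le (by linarith) hu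
  -- key: v * exp (-(v-u)/(2a)) ≤ √(u*v)
  have key : v * Real.exp (-((v - u)/(2*a))) ≤ Real.sqrt (u * v) := by
    have hsq : (v * Real.exp (-((v - u)/(2*a))))^2 ≤ u * v := by
      have hexp2 : Real.exp (-((v - u)/(2*a)))^2 = Real.exp (-((v-u)/a)) := by
        rw [← Real.exp_nat_mul]
        congr 1
        field_simp
        ring
      have hkey2 : v ≤ u * Real.exp ((v - u)/a) := by
        have h1 : (v - u)/a + 1 ≤ Real.exp ((v - u)/a) := Real.add_one_le_exp _
        have h2 : u * ((v - u)/a + 1) ≤ u * Real.exp ((v - u)/a) :=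
          mul_le_mul_of_nonneg_left h1 hu0.le
        have h3 : v ≤ u * ((v - u)/a + 1) := by
          have h5 : v - u ≤ u * ((v - u)/a) := by
            rw [← mul_div_assoc, le_div_iff₀ ha0]
            nlinarith
          nlinarith
        linarith
      have hev : 0 < Real.exp ((v-u)/a) := Real.exp_pos _
      rw [mul_pow, hexp2, Real.exp_neg, mul_inv_le_iff₀ hev]
      nlinarith [mul_le_mul_of_nonneg_right hkey2 hv0.le]
    calc v * Real.exp (-((v - u)/(2*a))) = Real.sqrt ((v * Real.exp (-((v - u)/(2*a))))^2) := by
          rw [Real.sqrt_sq (by positivity)]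
      _ ≤ Real.sqrt (u * v) := Real.sqrt_le_sqrt hsq
  have hpos : 0 < v * Real.exp (-((v - u)/(2*a))) := by positivity
  have h1 : Wker v u ≤ Real.exp (u - v) / (v * Real.exp (-((v - u)/(2*a)))) := by
    unfold Wker
    exact div_le_div_of_nonneg_left (Real.exp_pos _).le hpos key
  refine h1.trans_eq ?_
  rw [div_eq_mul_inv, mul_inv, Real.exp_neg, inv_inv, ← mul_assoc, mul_comm (Real.exp (u-v)) v⁻¹,
    mul_assoc, ← Real.exp_add]
  congr 2
  field_simp
  ring

lemma inner_le_big (v : ℝ) (hv : 4 ≤ v) :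
    (∫ u in (0:ℝ)..v, Wker v u) ≤ v⁻¹ + 33 * v ^ (-(3/2) : ℝ) := by
  have hv0 : (0:ℝ) < v := by linarith
  by_cases hint : IntervalIntegrable (Wker v) volume 0 v
  swap
  · rw [intervalIntegral.integral_undef hint]; positivity
  set a := Real.sqrt v with ha
  have ha2 : 2 ≤ a := by
    rw [ha, show (2:ℝ) = Real.sqrt 4 by rw [show (4:ℝ) = 2^2 by norm_num, Real.sqrt_sq]; norm_num]
    exact Real.sqrt_le_sqrt hv
  have ha0 : 0 < a := by linarith
  have haa : a * a = v := Real.mul_self_sqrt hv0.le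
  have hav : a ≤ v := by nlinarith
  have hav2 : a ≤ v / 2 := by nlinarith
  have hsub1 : Set.uIcc (0:ℝ) a ⊆ Set.uIcc (0:ℝ) v := Set.uIcc_subset_uIcc (Set.left_mem_uIcc)
    (by rw [Set.mem_uIcc]; left; exact ⟨ha0.le, hav⟩)
  have hsub2 : Set.uIcc a v ⊆ Set.uIcc (0:ℝ) v := Set.uIcc_subset_uIcc
    (by rw [Set.mem_uIcc]; left; exact ⟨ha0.le, hav⟩)
    (by rw [Set.mem_uIcc]; left; exact ⟨hv0.le, le_rfl⟩)
  have hint1 : IntervalIntegrable (Wker v) volume 0 a := hint.mono_set hsub1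
  have hint2 : IntervalIntegrable (Wker v) volume a v := hint.mono_set hsub2
  have hsplit : (∫ u in (0:ℝ)..v, Wker v u)
      = (∫ u in (0:ℝ)..a, Wker v u) + (∫ u in a..v, Wker v u) :=
    (intervalIntegral.integral_add_adjacent_intervals hint1 hint2).symm
  -- head part
  have hhead : (∫ u in (0:ℝ)..a, Wker v u) ≤ 32 * v ^ (-(3/2) : ℝ) := by
    refine (head_bound v a ha0.le hav hint1).trans ?_
    have h1 : (Real.sqrt v)⁻¹ * (2 * Real.sqrt a) ≤ 2 := by
      rw [inv_mul_le_iff₀ (Real.sqrt_pos.2 hv0)]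
      have : Real.sqrt a ≤ Real.sqrt v := Real.sqrt_le_sqrt hav
      linarith
    have h2 : Real.exp (a - v) ≤ 16 / v^2 := by
      have e1 : Real.exp (a - v) ≤ Real.exp (-(v/2)) := by
        apply Real.exp_le_exp.2; linarith
      have e2 : (v/2/2 + 1)^2 ≤ Real.exp (v/2) := by
        have := Real.add_one_le_exp (v/2/2)
        have h3 : Real.exp (v/2/2)^2 = Real.exp (v/2) := by
          rw [← Real.exp_nat_mul]; congr 1; push_cast; ring
        nlinarith [Real.exp_pos (v/2/2)]
      have e3 : v^2/16 ≤ Real.exp (v/2) := by nlinarith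
      refine e1.trans ?_
      rw [Real.exp_neg, inv_le_comm₀ (Real.exp_pos _) (by positivity)]
      calc (16 / v^2)⁻¹ = v^2/16 := by field_simp
        _ ≤ Real.exp (v/2) := e3
    have h4 : 16 / v^2 ≤ 16 * v ^ (-(3/2) : ℝ) := by
      rw [div_le_iff₀ (by positivity)]
      have : (16:ℝ) * v ^ (-(3/2) : ℝ) * v^2 = 16 * v ^ ((1:ℝ)/2) := by
        rw [mul_assoc, ← Real.rpow_natCast v 2, ← Real.rpow_add hv0]
        norm_num
      rw [this]
      have : (1:ℝ) ≤ v ^ ((1:ℝ)/2) := by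
        exact Real.one_le_rpow (by linarith) (by norm_num)
      linarith
    calc Real.exp (a - v) * (Real.sqrt v)⁻¹ * (2 * Real.sqrt a)
        ≤ Real.exp (a - v) * 2 := by
          rw [mul_assoc]
          exact mul_le_mul_of_nonneg_left h1 (Real.exp_pos _).le
      _ ≤ 16 / v^2 * 2 := mul_le_mul_of_nonneg_right h2 (by norm_num)
      _ ≤ 32 * v ^ (-(3/2) : ℝ) := by nlinarith [h4]
  -- tail part
  have htail : (∫ u in a..v, Wker v u) ≤ v⁻¹ + v ^ (-(3/2) : ℝ) := by
    set l : ℝ := 1 - 1/(2*a) with hl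
    have hl0 : 0 < l := by
      rw [hl]
      have : 1/(2*a) ≤ 1/4 := by
        apply div_le_div_of_nonneg_left (by norm_num) (by norm_num) (by linarith)
      linarith [this]
    have hmaj : ∀ u ∈ Set.Icc a v, Wker v u ≤ v⁻¹ * Real.exp (l * (u - v)) := fun u hu =>
      wker_le_tail v u hv hu.1 hu.2
    have hintmaj : IntervalIntegrable (fun u => v⁻¹ * Real.exp (l * (u - v))) volume a v :=
      ((Real.continuous_exp.comp (by continuity)).const_smul v⁻¹).intervalIntegrable a v
    have h5 := intervalIntegral.integral_mono_on hav hint2 hintmaj hmaj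
    refine h5.trans ?_
    rw [intervalIntegral.integral_const_mul, integral_exp_lin l a v hl0]
    have h6 : (Real.exp (l * (v - v)) - Real.exp (l * (a - v))) / l ≤ 1/l := by
      rw [show l * (v - v) = 0 by ring, Real.exp_zero]
      apply div_le_div_of_nonneg_right ?_ hl0.le
      nlinarith [Real.exp_pos (l * (a - v))]
    have h7 : (1:ℝ)/l ≤ 1 + 1/a := by
      rw [div_le_iff₀ hl0, hl]
      have h8 : 1/(2*a) ≤ 1/4 := by
        apply div_le_div_of_nonneg_left (by norm_num) (by norm_num) (by linarith)
      have h9 : 0 < 1/(2*a) := by positivity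
      have h10 : (1 + 1/a) * (1 - 1/(2*a)) = 1 + 1/(2*a) - (1/a)*(1/(2*a)) := by ring
      have h11 : (1/a)*(1/(2*a)) ≤ (1/2)*(1/(2*a)) := by
        apply mul_le_mul_of_nonneg_right _ h9.le
        rw [div_le_div_iff₀ ha0 (by norm_num)]; linarith
      linarith
    have h12 : v⁻¹ * a⁻¹ = v ^ (-(3/2) : ℝ) := by
      rw [ha, Real.sqrt_eq_rpow, ← Real.rpow_neg_one v, ← Real.rpow_neg hv0.le,
        ← Real.rpow_add hv0]
      norm_num
    calc v⁻¹ * ((Real.exp (l * (v - v)) - Real.exp (l * (a - v))) / l)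
        ≤ v⁻¹ * (1/l) := by
          apply mul_le_mul_of_nonneg_left h6 (by positivity)
      _ ≤ v⁻¹ * (1 + 1/a) := mul_le_mul_of_nonneg_left h7 (by positivity)
      _ = v⁻¹ + v⁻¹ * a⁻¹ := by rw [one_div]; ring
      _ = v⁻¹ + v ^ (-(3/2) : ℝ) := by rw [h12]
  rw [hsplit]
  linarith

theorem stmt_12 :
    ∃ c > 0, ∀ y : ℝ, 0 ≤ y →
      (∫ v in (0 : ℝ)..y, ∫ u in (0 : ℝ)..v, Real.exp (u - v) / Real.sqrt (u * v)) <
        Real.log (1 + y) + c := by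
  refine ⟨42, by norm_num, fun y hy => ?_⟩
  have hlog : 0 ≤ Real.log (1 + y) := Real.log_nonneg (by linarith)
  have hWker : (fun v => ∫ u in (0:ℝ)..v, Real.exp (u - v) / Real.sqrt (u * v))
      = fun v => ∫ u in (0:ℝ)..v, Wker v u := rfl
  by_cases hI : IntervalIntegrable (fun v => ∫ u in (0:ℝ)..v, Wker v u) volume 0 y
  swap
  · rw [show (∫ v in (0 : ℝ)..y, ∫ u in (0 : ℝ)..v, Real.exp (u - v) / Real.sqrt (u * v))
        = ∫ v in (0 : ℝ)..y, ∫ u in (0 : ℝ)..v, Wker v u from rfl,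
      intervalIntegral.integral_undef hI]
    linarith
  rw [show (∫ v in (0 : ℝ)..y, ∫ u in (0 : ℝ)..v, Real.exp (u - v) / Real.sqrt (u * v))
      = ∫ v in (0 : ℝ)..y, ∫ u in (0 : ℝ)..v, Wker v u from rfl]
  rcases le_or_gt y 4 with hy4 | hy4
  · -- small y
    have h1 : (∫ v in (0:ℝ)..y, ∫ u in (0:ℝ)..v, Wker v u) ≤ ∫ v in (0:ℝ)..y, (2:ℝ) := by
      apply intervalIntegral.integral_mono_on hy hI (intervalIntegrable_const (c := (2:ℝ)))
      intro v hv
      exact inner_le_two v hv.1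
    rw [intervalIntegral.integral_const, smul_eq_mul] at h1
    have : (y - 0) * 2 ≤ 8 := by linarith
    linarith
  · -- large y
    have h04 : (0:ℝ) ≤ 4 := by norm_num
    have hsub1 : Set.uIcc (0:ℝ) 4 ⊆ Set.uIcc (0:ℝ) y := Set.uIcc_subset_uIcc
      Set.left_mem_uIcc (by rw [Set.mem_uIcc]; left; constructor <;> linarith)
    have hsub2 : Set.uIcc (4:ℝ) y ⊆ Set.uIcc (0:ℝ) y := Set.uIcc_subset_uIcc
      (by rw [Set.mem_uIcc]; left; constructor <;> linarith)
      (by rw [Set.mem_uIcc]; left; constructor <;> linarith)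
    have hI1 := hI.mono_set hsub1
    have hI2 := hI.mono_set hsub2
    rw [← intervalIntegral.integral_add_adjacent_intervals hI1 hI2]
    have h1 : (∫ v in (0:ℝ)..(4:ℝ), ∫ u in (0:ℝ)..v, Wker v u) ≤ 8 := by
      have := intervalIntegral.integral_mono_on h04 hI1 (intervalIntegrable_const (c := (2:ℝ)))
        (fun v hv => inner_le_two v hv.1)
      rw [intervalIntegral.integral_const, smul_eq_mul] at this
      linarith
    have h2 : (∫ v in (4:ℝ)..y, ∫ u in (0:ℝ)..v, Wker v u)
        ≤ ∫ v in (4:ℝ)..y, (v⁻¹ + 33 * v ^ (-(3/2) : ℝ)) := by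
      have hnot : (0:ℝ) ∉ Set.uIcc (4:ℝ) y := by
        rw [Set.mem_uIcc]; push_neg; constructor <;> intro h <;> linarith
      have hmajint : IntervalIntegrable (fun v => v⁻¹ + 33 * v ^ (-(3/2) : ℝ)) volume 4 y := by
        apply IntervalIntegrable.add
        · exact intervalIntegral.intervalIntegrable_inv (fun x hx => ne_of_mem_of_not_mem hx hnot) continuousOn_id
        · exact (intervalIntegral.intervalIntegrable_rpow (Or.inr hnot)).const_mul 33
      exact intervalIntegral.integral_mono_on hy4.le hI2 hmajint
        (fun v hv => inner_le_big v hv.1)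
    have h3 : (∫ v in (4:ℝ)..y, (v⁻¹ + 33 * v ^ (-(3/2) : ℝ)))
        ≤ Real.log (1 + y) + 33 := by
      have hnot : (0:ℝ) ∉ Set.uIcc (4:ℝ) y := by
        rw [Set.mem_uIcc]; push_neg; constructor <;> intro h <;> linarith
      have e1 : IntervalIntegrable (fun v : ℝ => v⁻¹) volume 4 y :=
        intervalIntegral.intervalIntegrable_inv (fun x hx => ne_of_mem_of_not_mem hx hnot) continuousOn_id
      have e2 : IntervalIntegrable (fun v : ℝ => 33 * v ^ (-(3/2) : ℝ)) volume 4 y :=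
        (intervalIntegral.intervalIntegrable_rpow (Or.inr hnot)).const_mul 33
      rw [intervalIntegral.integral_add e1 e2, intervalIntegral.integral_const_mul,
        integral_inv_of_pos (by norm_num) (by linarith),
        integral_rpow (Or.inr ⟨by norm_num, hnot⟩)]
      have l1 : Real.log (y / 4) ≤ Real.log (1 + y) := by
        apply Real.log_le_log (by positivity)
        linarith
      have l2 : (y ^ (-(3/2) + 1 : ℝ) - (4:ℝ) ^ (-(3/2) + 1 : ℝ)) / (-(3/2) + 1) ≤ 1 := by
        rw [show (-(3/2) + 1 : ℝ) = -(1/2) by norm_num]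
        have p1 : (0:ℝ) ≤ y ^ (-(1/2) : ℝ) := Real.rpow_nonneg (by linarith) _
        have p2 : (4:ℝ) ^ (-(1/2) : ℝ) = 1/2 := by
          rw [Real.rpow_neg (by norm_num), show ((1:ℝ)/2) = ((2:ℝ))⁻¹ by norm_num]
          congr 1
          rw [show (4:ℝ) = (2:ℝ)^(2:ℕ) by norm_num, ← Real.rpow_natCast (2:ℝ) 2,
            ← Real.rpow_mul (by norm_num)]
          norm_num
        rw [p2]
        rw [div_le_iff_of_neg (by norm_num : (-(1/2):ℝ) < 0)]
        linarith
      have := mul_le_mul_of_nonneg_left l2 (by norm_num : (0:ℝ) ≤ 33)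
      linarith
    linarith
end
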